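/- arXiv:1805.12508 — 3 statements merged into one kernel-verified Lean document; each statement's English description precedes it below -/
import Mathlib

section
/- For every finite simple graph G with at least one edge, there exists a vertex w of G such that min-match(G − N_G[w]) ≤ min-match(G) − 1, where min-match denotes the minimum cardinality of a maximal matching. -/
open SimpleGraph

namespace Paper

/-- The complete graph on two vertices, `K₂`. -/
def k2 : SimpleGraph (Fin 2) := ⊤

/-- The 5-cycle `C₅`. -/
def cycle5 : SimpleGraph (ZMod 5) := SimpleGraph.fromRel (fun a b => b = a + 1)

/-- A graph is chordal if it has no induced cycle of length at least four. -/
def IsChordal {V : Type*} (G : SimpleGraph V) : Prop :=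
  ∀ n : ℕ, 4 ≤ n → IsEmpty (SimpleGraph.cycleGraph n ↪g G)

/-- A graph is co-chordal if its complement is chordal. -/
def IsCochordal {V : Type*} (G : SimpleGraph V) : Prop := IsChordal Gᶜ

/-- The co-chordal cover number: the minimum number of co-chordal subgraphs of `G`
needed to cover all edges of `G`. -/
noncomputable def cochord {V : Type*} (G : SimpleGraph V) : ℕ :=
  sInf { t | ∃ f : Fin t → SimpleGraph V,
    (∀ i, f i ≤ G ∧ IsCochordal (f i)) ∧ ∀ ⦃u v : V⦄, G.Adj u v → ∃ i, (f i).Adj u v }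

/-- The closed neighborhood `N_G[w]`. -/
def closedNbhd {V : Type*} (G : SimpleGraph V) (w : V) : Set V :=
  insert w (G.neighborSet w)

/-- The graph `G - N_G[w]`: the induced subgraph on the complement of the closed
neighborhood of `w`. -/
def delClosedNbhd {V : Type*} (G : SimpleGraph V) (w : V) :
    SimpleGraph ((closedNbhd G w)ᶜ : Set V) := G.induce _

/-- A maximal matching: a matching such that no edge of `G` is disjoint from all of
its edges. -/
def IsMaximalMatching {V : Type*} (G : SimpleGraph V) (M : G.Subgraph) : Prop :=
  M.IsMatching ∧ ∀ ⦃u v : V⦄, G.Adj u v → u ∈ M.support ∨ v ∈ M.support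

/-- The minimum matching number: the minimum cardinality of a maximal matching. -/
noncomputable def minMatch {V : Type*} (G : SimpleGraph V) : ℕ :=
  sInf { k | ∃ M : G.Subgraph, IsMaximalMatching G M ∧ M.edgeSet.ncard = k }

/-- The matching number of a graph: maximum cardinality of a matching. -/
noncomputable def matchNum {V : Type*} (G : SimpleGraph V) : ℕ :=
  sSup { k | ∃ M : G.Subgraph, M.IsMatching ∧ M.edgeSet.ncard = k }

/-- A graph all of whose connected components are isomorphic to `K₂` or `C₅`. -/
def IsK2C5Graph {V : Type*} (G : SimpleGraph V) : Prop :=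
  ∀ c : G.ConnectedComponent,
    Nonempty (G.induce c.supp ≃g k2) ∨ Nonempty (G.induce c.supp ≃g cycle5)

/-- A maximal `{K₂, C₅}`-subgraph of `G`: a subgraph whose components are all `K₂` or
`C₅` such that the induced subgraph of `G` on the vertices outside it has no edge. -/
def IsMaximalK2C5Subgraph {V : Type*} (G : SimpleGraph V) (H : G.Subgraph) : Prop :=
  IsK2C5Graph H.coe ∧ ∀ ⦃u v : V⦄, G.Adj u v → u ∈ H.verts ∨ v ∈ H.verts

/-- `min-match_{K₂,C₅}(G)`: the minimum matching number of a maximal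
`{K₂, C₅}`-subgraph of `G` (with value `0` if `G` has no edge, via `sInf ∅ = 0`:
if `G` is edgeless the empty subgraph is a maximal `{K₂,C₅}`-subgraph). -/
noncomputable def minMatchK2C5 {V : Type*} (G : SimpleGraph V) : ℕ :=
  sInf { k | ∃ H : G.Subgraph, IsMaximalK2C5Subgraph G H ∧ matchNum H.coe = k }

/-- An induced matching of `G`. -/
def IsInducedMatching {V : Type*} (G : SimpleGraph V) (M : G.Subgraph) : Prop :=
  M.IsMatching ∧ ∀ ⦃u v : V⦄, G.Adj u v → u ∈ M.support → v ∈ M.support → M.Adj u v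

/-- The induced matching number of `G`. -/
noncomputable def indMatch {V : Type*} (G : SimpleGraph V) : ℕ :=
  sSup { k | ∃ M : G.Subgraph, IsInducedMatching G M ∧ M.edgeSet.ncard = k }

/-- `ind-match_{K₂,C₅}(G)`: the maximum matching number of an induced subgraph of `G`
all of whose connected components are `K₂` or `C₅`. -/
noncomputable def indMatchK2C5 {V : Type*} (G : SimpleGraph V) : ℕ :=
  sSup { k | ∃ s : Set V, IsK2C5Graph (G.induce s) ∧ matchNum (G.induce s) = k }

lemma matching_edge_unique {W : Type*} {H : SimpleGraph W} {M : H.Subgraph}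
    (hM : M.IsMatching) {v : W} {f₁ f₂ : Sym2 W} (h1 : f₁ ∈ M.edgeSet)
    (h2 : f₂ ∈ M.edgeSet) (hv1 : v ∈ f₁) (hv2 : v ∈ f₂) : f₁ = f₂ := by
  induction f₁ with
  | h a b =>
    induction f₂ with
    | h c d =>
      rw [Sym2.mem_iff] at hv1 hv2
      rw [SimpleGraph.Subgraph.mem_edgeSet] at h1 h2
      have key : ∀ x y z : W, M.Adj v x → M.Adj v y → z = v → s(v, x) = s(z, y) := by
        intro x y z hx hy hz
        subst hz
        obtain ⟨u, -, hu⟩ := hM (M.edge_vert hx)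
        rw [hu x hx, hu y hy]
      rcases hv1 with rfl | rfl
      · rcases hv2 with rfl | rfl
        · exact key b d v h1 h2 rfl
        · rw [Sym2.eq_swap (a := c)]; exact key b c v h1 h2.symm rfl
      · rw [Sym2.eq_swap (a := a)]
        rcases hv2 with rfl | rfl
        · exact key a d v h1.symm h2 rfl
        · rw [Sym2.eq_swap (a := c)]; exact key a c v h1.symm h2.symm rfl

lemma sym2_mem_eq {W : Type*} (g : Sym2 W) (p q r : W) (hp : p ∈ g) (hq : q ∈ g)
    (hr : r ∈ g) (hpr : p ≠ r) (hqr : q ≠ r) : p = q := by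
  induction g with
  | h u v =>
    rw [Sym2.mem_iff] at hp hq hr
    rcases hr with rfl | rfl <;> rcases hp with rfl | rfl <;> rcases hq with rfl | rfl <;> tauto

lemma exists_maximal_matching_ge {W : Type*} [Finite W] (H : SimpleGraph W)
    (A : H.Subgraph) (hA : A.IsMatching) :
    ∃ M : H.Subgraph, A ≤ M ∧ IsMaximalMatching H M := by
  classical
  set T : Set ℕ := {n | ∃ M : H.Subgraph, A ≤ M ∧ M.IsMatching ∧ M.edgeSet.ncard = n} with hT
  have hne : T.Nonempty := ⟨A.edgeSet.ncard, A, le_refl _, hA, rfl⟩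
  have hbdd : BddAbove T := by
    refine ⟨(Set.univ : Set (Sym2 W)).ncard, ?_⟩
    rintro n ⟨M, -, -, rfl⟩
    exact Set.ncard_le_ncard (Set.subset_univ _) Set.finite_univ
  obtain ⟨M, hAM, hMm, hMc⟩ := Nat.sSup_mem hne hbdd
  refine ⟨M, hAM, hMm, ?_⟩
  intro u v huv
  by_contra hcon
  push_neg at hcon
  obtain ⟨hu, hv⟩ := hcon
  have hd : Disjoint M.support (H.subgraphOfAdj huv).support := by
    rw [SimpleGraph.support_subgraphOfAdj]
    rw [Set.disjoint_right]
    rintro x (rfl | rfl) <;> assumption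
  have hM' : (M ⊔ H.subgraphOfAdj huv).IsMatching :=
    hMm.sup (SimpleGraph.Subgraph.IsMatching.subgraphOfAdj huv) hd
  have hmem : (M ⊔ H.subgraphOfAdj huv).edgeSet.ncard ∈ T :=
    ⟨_, le_trans hAM le_sup_left, hM', rfl⟩
  have hlt : M.edgeSet.ncard < (M ⊔ H.subgraphOfAdj huv).edgeSet.ncard := by
    rw [SimpleGraph.Subgraph.edgeSet_sup, SimpleGraph.edgeSet_subgraphOfAdj]
    have hnotmem : s(u, v) ∉ M.edgeSet := by
      intro h
      exact hu ((SimpleGraph.Subgraph.mem_support _).mpr ⟨v, h⟩)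
    have : M.edgeSet ∪ {s(u,v)} = insert s(u,v) M.edgeSet := by
      rw [Set.union_singleton]
    rw [this, Set.ncard_insert_of_notMem hnotmem (Set.toFinite _)]
    omega
  have := le_csSup hbdd hmem
  omega


/-- For every finite simple graph `G` with at least one edge, there exists a vertex `w`
such that `min-match(G - N_G[w]) ≤ min-match(G) - 1`. -/
theorem stmt1 {V : Type*} [Fintype V] (G : SimpleGraph V) (hE : G.edgeSet.Nonempty) :
    ∃ w : V, minMatch (delClosedNbhd G w) + 1 ≤ minMatch G := by
  classical
  have hbot : (⊥ : G.Subgraph).IsMatching := by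
    intro v hv
    simp only [SimpleGraph.Subgraph.verts_bot, Set.mem_empty_iff_false] at hv
  obtain ⟨M0, -, hM0⟩ := exists_maximal_matching_ge G ⊥ hbot
  have hne : {k | ∃ M : G.Subgraph, IsMaximalMatching G M ∧ M.edgeSet.ncard = k}.Nonempty :=
    ⟨_, M0, hM0, rfl⟩
  obtain ⟨M, hMmax, hMc⟩ := Nat.sInf_mem hne
  obtain ⟨hMm, hMdom⟩ := hMmax
  obtain ⟨f0, hf0⟩ := hE
  obtain ⟨w, x, hwx⟩ : ∃ w x, M.Adj w x := by
    induction f0 with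
    | h u v =>
      rcases hMdom (G.mem_edgeSet.mp hf0) with h | h
      · obtain ⟨y, hy⟩ := (SimpleGraph.Subgraph.mem_support _).mp h; exact ⟨_, _, hy⟩
      · obtain ⟨y, hy⟩ := (SimpleGraph.Subgraph.mem_support _).mp h; exact ⟨_, _, hy⟩
  refine ⟨w, ?_⟩
  set S : Set V := closedNbhd G w with hSdef
  have hwS : w ∈ S := Set.mem_insert _ _
  have hxS : x ∈ S := Set.mem_insert_iff.mpr (Or.inr (M.adj_sub hwx))
  set G' : SimpleGraph ((closedNbhd G w)ᶜ : Set V) := delClosedNbhd G w with hG'def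
  -- The matching A on G' consisting of M-edges entirely outside S
  let A : G'.Subgraph :=
    { verts := {a : ((closedNbhd G w)ᶜ : Set V) |
        ∃ b : ((closedNbhd G w)ᶜ : Set V), M.Adj ↑a ↑b}
      Adj := fun a b => M.Adj ↑a ↑b
      adj_sub := fun h => M.adj_sub h
      edge_vert := fun h => ⟨_, h⟩
      symm := ⟨fun a b h => M.adj_symm h⟩ }
  have hAadj : ∀ a b : ((closedNbhd G w)ᶜ : Set V), A.Adj a b ↔ M.Adj ↑a ↑b :=
    fun a b => Iff.rfl
  have hAm : A.IsMatching := by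
    rintro a ⟨b, hb⟩
    refine ⟨b, hb, ?_⟩
    intro y hy
    obtain ⟨c, -, hc⟩ := hMm (M.edge_vert hb)
    exact Subtype.ext ((hc ↑y hy).trans (hc ↑b hb).symm)
  obtain ⟨D, hAD, hDmax⟩ := exists_maximal_matching_ge G' A hAm
  obtain ⟨hDm, hDdom⟩ := hDmax
  -- every edge of D maps to a suitable edge of M
  have key : ∀ f ∈ D.edgeSet, ∃ g : Sym2 V, g ∈ M.edgeSet ∧
      (∃ a : ((closedNbhd G w)ᶜ : Set V), a ∈ f ∧ (↑a : V) ∈ g) ∧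
      (g = Sym2.map (↑) f ∨ ∃ c ∈ g, c ∈ S) := by
    have aux : ∀ a b : ((closedNbhd G w)ᶜ : Set V), D.Adj a b → (↑a : V) ∈ M.support →
        ∃ g : Sym2 V, g ∈ M.edgeSet ∧
        (∃ p : ((closedNbhd G w)ᶜ : Set V), p ∈ s(a, b) ∧ (↑p : V) ∈ g) ∧
        (g = Sym2.map (↑) s(a, b) ∨ ∃ c ∈ g, c ∈ S) := by
      intro a b hab hsup
      obtain ⟨c, hc⟩ := (SimpleGraph.Subgraph.mem_support _).mp hsup
      by_cases hcS : c ∈ S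
      · exact ⟨s(↑a, c), SimpleGraph.Subgraph.mem_edgeSet.mpr hc,
          ⟨a, Sym2.mem_mk_left _ _, Sym2.mem_mk_left _ _⟩,
          Or.inr ⟨c, Sym2.mem_mk_right _ _, hcS⟩⟩
      · have hc' : c ∈ ((closedNbhd G w)ᶜ : Set V) := hcS
        have hDc : D.Adj a ⟨c, hc'⟩ := hAD.2 hc
        obtain ⟨y, -, hy⟩ := hDm (D.edge_vert hab)
        have hbc : b = ⟨c, hc'⟩ := (hy b hab).trans (hy ⟨c, hc'⟩ hDc).symm
        refine ⟨s(↑a, ↑b), SimpleGraph.Subgraph.mem_edgeSet.mpr ?_,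
          ⟨a, Sym2.mem_mk_left _ _, Sym2.mem_mk_left _ _⟩,
          Or.inl (Sym2.map_pair_eq _ _ _).symm⟩
        rw [hbc]; exact hc
    intro f hf
    induction f with
    | h a b =>
      have hab : D.Adj a b := SimpleGraph.Subgraph.mem_edgeSet.mp hf
      have hG : G.Adj ↑a ↑b := D.adj_sub hab
      rcases hMdom hG with h | h
      · exact aux a b hab h
      · rw [Sym2.eq_swap]
        exact aux b a hab.symm h
  have key' : ∀ f : Sym2 ((closedNbhd G w)ᶜ : Set V), ∃ g : Sym2 V, f ∈ D.edgeSet →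
      g ∈ M.edgeSet ∧
      (∃ a : ((closedNbhd G w)ᶜ : Set V), a ∈ f ∧ (↑a : V) ∈ g) ∧
      (g = Sym2.map (↑) f ∨ ∃ c ∈ g, c ∈ S) := by
    intro f
    by_cases h : f ∈ D.edgeSet
    · obtain ⟨g, hg⟩ := key f h
      exact ⟨g, fun _ => hg⟩
    · exact ⟨Sym2.map (↑) f, fun hf => absurd hf h⟩
  choose φ hφ using key'
  have hmaps : ∀ f ∈ D.edgeSet, φ f ∈ M.edgeSet \ {s(w, x)} := by
    intro f hf
    obtain ⟨hg1, ⟨a, haf, hag⟩, -⟩ := hφ f hf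
    refine ⟨hg1, ?_⟩
    intro hcon
    rw [Set.mem_singleton_iff] at hcon
    rw [hcon, Sym2.mem_iff] at hag
    have : (↑a : V) ∈ S := by
      rcases hag with h | h
      · rw [h]; exact hwS
      · rw [h]; exact hxS
    exact a.2 this
  have hinj : Set.InjOn φ D.edgeSet := by
    intro f₁ hf₁ f₂ hf₂ heq
    obtain ⟨hg1, ⟨a₁, ha₁f, ha₁g⟩, hc1⟩ := hφ f₁ hf₁
    obtain ⟨hg2, ⟨a₂, ha₂f, ha₂g⟩, hc2⟩ := hφ f₂ hf₂
    have hnotS : ∀ (p : ((closedNbhd G w)ᶜ : Set V)) (c : V), c ∈ S → (↑p : V) ≠ c := by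
      rintro p c hcS rfl
      exact p.2 hcS
    rcases hc1 with h1 | ⟨c₁, hc₁g, hc₁S⟩
    · rcases hc2 with h2 | ⟨c₂, hc₂g, hc₂S⟩
      · exact Sym2.map.injective Subtype.coe_injective (h1 ▸ h2 ▸ heq)
      · exfalso
        have : c₂ ∈ Sym2.map (↑) f₁ := by rw [← h1, heq]; exact hc₂g
        obtain ⟨p, -, hp⟩ := Sym2.mem_map.mp this
        exact hnotS p c₂ hc₂S hp
    · rcases hc2 with h2 | ⟨c₂, hc₂g, hc₂S⟩
      · exfalso
        have : c₁ ∈ Sym2.map (↑) f₂ := by rw [← h2, ← heq]; exact hc₁g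
        obtain ⟨p, -, hp⟩ := Sym2.mem_map.mp this
        exact hnotS p c₁ hc₁S hp
      · have ha₂g' : (↑a₂ : V) ∈ φ f₁ := by rw [heq]; exact ha₂g
        have hc₁g' : c₁ ∈ φ f₁ := hc₁g
        have haa : (↑a₁ : V) = ↑a₂ :=
          sym2_mem_eq (φ f₁) ↑a₁ ↑a₂ c₁ ha₁g ha₂g' hc₁g'
            (hnotS a₁ c₁ hc₁S) (hnotS a₂ c₁ hc₁S)
        have haa' : a₁ = a₂ := Subtype.ext haa
        exact matching_edge_unique hDm hf₁ hf₂ (haa' ▸ ha₁f) ha₂f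
  have hcard : D.edgeSet.ncard ≤ (M.edgeSet \ {s(w, x)}).ncard :=
    Set.ncard_le_ncard_of_injOn φ hmaps hinj (Set.toFinite _)
  have hewx : s(w, x) ∈ M.edgeSet := SimpleGraph.Subgraph.mem_edgeSet.mpr hwx
  have hcard2 : (M.edgeSet \ {s(w, x)}).ncard = M.edgeSet.ncard - 1 :=
    Set.ncard_diff_singleton_of_mem hewx
  have hpos : 1 ≤ M.edgeSet.ncard :=
    (Set.ncard_pos (Set.toFinite _)).mpr ⟨_, hewx⟩
  have hmin' : minMatch G' ≤ D.edgeSet.ncard :=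
    Nat.sInf_le ⟨D, ⟨hDm, hDdom⟩, rfl⟩
  have hminG : minMatch G = M.edgeSet.ncard := hMc.symm
  omega


end Paper
end

section
/- Let G be a triangle-free finite simple graph and let W(G) be the graph obtained from G by attaching a whisker (a new pendant vertex joined by an edge) to every vertex of G. Then any co-chordal subgraph of W(G) contains at most two whisker edges, and consequently cochord(W(G)) ≥ |V(G)|/2. -/
open SimpleGraph

namespace Paper

/-- The whisker graph `W(G)`: to each vertex `v : V` (as `Sum.inl v`) we attach a new
pendant vertex `Sum.inr v` joined to it by an edge. -/
def whisker {V : Type*} (G : SimpleGraph V) : SimpleGraph (V ⊕ V) :=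
  SimpleGraph.fromRel (fun a b =>
    (∃ u v : V, a = Sum.inl u ∧ b = Sum.inl v ∧ G.Adj u v) ∨
    (∃ v : V, a = Sum.inl v ∧ b = Sum.inr v))

lemma gap_not_cochordal {W : Type*} (H : SimpleGraph W) {a b c d : W}
    (hab : H.Adj a b) (hcd : H.Adj c d)
    (h1 : ¬H.Adj a c) (h2 : ¬H.Adj a d) (h3 : ¬H.Adj b c) (h4 : ¬H.Adj b d)
    (nac : a ≠ c) (nad : a ≠ d) (nbc : b ≠ c) (nbd : b ≠ d) :
    ¬ IsCochordal H := by
  intro h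
  have nab : a ≠ b := hab.ne
  have ncd : c ≠ d := hcd.ne
  refine (h 4 le_rfl).elim ?_
  have hinj : Function.Injective ![a, c, b, d] := by
    intro u v huv
    fin_cases u <;> fin_cases v <;> simp_all
  refine ⟨⟨![a, c, b, d], hinj⟩, ?_⟩
  intro u v
  have hab' := hab.symm
  have hcd' := hcd.symm
  have h1' : ¬H.Adj c a := fun h => h1 h.symm
  have h2' : ¬H.Adj d a := fun h => h2 h.symm
  have h3' : ¬H.Adj c b := fun h => h3 h.symm
  have h4' : ¬H.Adj d b := fun h => h4 h.symm
  have nca := Ne.symm nac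
  have nda := Ne.symm nad
  have ncb := Ne.symm nbc
  have ndb := Ne.symm nbd
  fin_cases u <;> fin_cases v <;>
    simp_all [compl_adj] <;> decide


lemma cyc_nonadj {m : ℕ} (i j : Fin (4+m)) (hij : j.val = i.val + 2) (hj : j.val < 4) :
    ¬(cycleGraph (4+m)).Adj i j := by
  rw [cycleGraph_adj']
  have h1 : ((j - i).val) = 2 := by
    rw [Fin.coe_sub_iff_le.mpr (by rw [Fin.le_def]; omega)]
    omega
  have h2 : ((i - j).val) = (4+m) + i.val - j.val :=
    Fin.coe_sub_iff_lt.mpr (by rw [Fin.lt_def]; omega)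
  omega

lemma top_chordal {W : Type*} : IsChordal (⊤ : SimpleGraph W) := by
  intro n hn
  obtain ⟨m, rfl⟩ := Nat.exists_eq_add_of_le hn
  constructor
  intro e
  have h02 : ¬(cycleGraph (4+m)).Adj ⟨0, by omega⟩ ⟨2, by omega⟩ :=
    cyc_nonadj _ _ rfl (by simp)
  have := e.map_rel_iff.not.mpr h02
  simp only [top_adj, ne_eq, not_not] at this
  exact absurd (e.injective this) (by simp [Fin.ext_iff])

lemma bot_cochordal {W : Type*} : IsCochordal (⊥ : SimpleGraph W) := by
  unfold IsCochordal
  rw [compl_bot]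
  exact top_chordal

lemma edge_cochordal {W : Type*} (a b : W) :
    IsCochordal (SimpleGraph.fromEdgeSet {s(a, b)}) := by
  intro n hn
  obtain ⟨m, rfl⟩ := Nat.exists_eq_add_of_le hn
  constructor
  intro e
  have key : ∀ (i j : Fin (4+m)), i ≠ j → ¬(cycleGraph (4+m)).Adj i j →
      s(e i, e j) = s(a, b) := by
    intro i j hne hnadj
    have := e.map_rel_iff.not.mpr hnadj
    rw [compl_adj, not_and, not_not] at this
    have h := this (fun h => hne (e.injective h))
    rw [fromEdgeSet_adj] at h
    simpa using h.1
  have h1 := key ⟨0, by omega⟩ ⟨2, by omega⟩ (by simp [Fin.ext_iff])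
    (cyc_nonadj _ _ rfl (by simp))
  have h2 := key ⟨1, by omega⟩ ⟨3, by omega⟩ (by simp [Fin.ext_iff])
    (cyc_nonadj _ _ rfl (by simp))
  have h3 := h1.trans h2.symm
  rw [Sym2.eq_iff] at h3
  rcases h3 with ⟨h, _⟩ | ⟨h, _⟩ <;>
    exact absurd (e.injective h) (by simp [Fin.ext_iff])


lemma whisker_adj_inl_inr {V : Type*} (G : SimpleGraph V) (v : V) :
    (whisker G).Adj (Sum.inl v) (Sum.inr v) :=
  ⟨by simp, Or.inl (Or.inr ⟨v, rfl, rfl⟩)⟩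

lemma part1 {V : Type*} (G : SimpleGraph V) (hG : G.CliqueFree 3)
    (H : SimpleGraph (V ⊕ V)) (hle : H ≤ whisker G) (hc : IsCochordal H) :
    {v : V | H.Adj (Sum.inl v) (Sum.inr v)}.ncard ≤ 2 := by
  classical
  by_contra hcon
  push_neg at hcon
  have main : ∀ x y : V, x ≠ y → ¬G.Adj x y → H.Adj (Sum.inl x) (Sum.inr x) →
      H.Adj (Sum.inl y) (Sum.inr y) → False := by
    intro x y hxy hadj hx hy
    have hadj' : ¬G.Adj y x := fun h => hadj h.symm
    have w1 : ¬(whisker G).Adj (Sum.inl x) (Sum.inl y) := by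
      rintro ⟨hne, (⟨u, v, h1, h2, h3⟩ | ⟨v, h1, h2⟩) | (⟨u, v, h1, h2, h3⟩ | ⟨v, h1, h2⟩)⟩ <;>
        simp_all
    have w2 : ¬(whisker G).Adj (Sum.inl x) (Sum.inr y) := by
      rintro ⟨hne, (⟨u, v, h1, h2, h3⟩ | ⟨v, h1, h2⟩) | (⟨u, v, h1, h2, h3⟩ | ⟨v, h1, h2⟩)⟩ <;>
        simp_all
    have w3 : ¬(whisker G).Adj (Sum.inr x) (Sum.inl y) := by
      rintro ⟨hne, (⟨u, v, h1, h2, h3⟩ | ⟨v, h1, h2⟩) | (⟨u, v, h1, h2, h3⟩ | ⟨v, h1, h2⟩)⟩ <;>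
        simp_all
    have w4 : ¬(whisker G).Adj (Sum.inr x) (Sum.inr y) := by
      rintro ⟨hne, (⟨u, v, h1, h2, h3⟩ | ⟨v, h1, h2⟩) | (⟨u, v, h1, h2, h3⟩ | ⟨v, h1, h2⟩)⟩ <;>
        simp_all
    exact gap_not_cochordal H hx hy
      (fun h => w1 (hle h)) (fun h => w2 (hle h)) (fun h => w3 (hle h)) (fun h => w4 (hle h))
      (by simp [hxy]) (by simp) (by simp) (by simp [hxy]) hc
  have h3 : 3 ≤ {v : V | H.Adj (Sum.inl v) (Sum.inr v)}.ncard := hcon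
  obtain ⟨t, hts, htn⟩ := Set.exists_subset_card_eq h3
  obtain ⟨a, b, c, hab, hac, hbc, rfl⟩ := Set.ncard_eq_three.mp htn
  have ha : H.Adj (Sum.inl a) (Sum.inr a) := hts (by simp)
  have hb : H.Adj (Sum.inl b) (Sum.inr b) := hts (by simp)
  have hc' : H.Adj (Sum.inl c) (Sum.inr c) := hts (by simp)
  have := hG {a, b, c}
  rw [is3Clique_triple_iff] at this
  push_neg at this
  by_cases h1 : G.Adj a b
  · by_cases h2 : G.Adj a c
    · exact main b c hbc (this h1 h2) hb hc'
    · exact main a c hac h2 ha hc'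
  · exact main a b hab h1 ha hb

theorem stmt13' {V : Type*} [Fintype V] (G : SimpleGraph V) (hG : G.CliqueFree 3) :
    (∀ H : SimpleGraph (V ⊕ V), H ≤ whisker G → IsCochordal H →
      {v : V | H.Adj (Sum.inl v) (Sum.inr v)}.ncard ≤ 2) ∧
    Fintype.card V ≤ 2 * cochord (whisker G) := by
  classical
  refine ⟨fun H hle hc => part1 G hG H hle hc, ?_⟩
  have hne : { t | ∃ f : Fin t → SimpleGraph (V ⊕ V),
      (∀ i, f i ≤ whisker G ∧ IsCochordal (f i)) ∧
      ∀ ⦃u v : V ⊕ V⦄, (whisker G).Adj u v → ∃ i, (f i).Adj u v }.Nonempty := by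
    refine ⟨Fintype.card ((V ⊕ V) × (V ⊕ V)), ?_⟩
    set eqv := Fintype.equivFin ((V ⊕ V) × (V ⊕ V)) with heqv
    refine ⟨fun i => if (whisker G).Adj (eqv.symm i).1 (eqv.symm i).2 then
        SimpleGraph.fromEdgeSet {s((eqv.symm i).1, (eqv.symm i).2)} else ⊥, ?_, ?_⟩
    · intro i
      dsimp only
      by_cases h : (whisker G).Adj (eqv.symm i).1 (eqv.symm i).2
      · rw [if_pos h]
        refine ⟨?_, edge_cochordal _ _⟩
        intro x y hxy
        rw [fromEdgeSet_adj] at hxy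
        obtain ⟨hs, hxyne⟩ := hxy
        simp only [Set.mem_singleton_iff, Sym2.eq_iff] at hs
        rcases hs with ⟨rfl, rfl⟩ | ⟨rfl, rfl⟩
        · exact h
        · exact h.symm
      · rw [if_neg h]
        exact ⟨bot_le, bot_cochordal⟩
    · intro u v huv
      refine ⟨eqv (u, v), ?_⟩
      dsimp only
      simp only [Equiv.symm_apply_apply]
      rw [if_pos huv, fromEdgeSet_adj]
      exact ⟨by simp, huv.ne⟩
  have hmem : ∃ f : Fin (cochord (whisker G)) → SimpleGraph (V ⊕ V),
      (∀ i, f i ≤ whisker G ∧ IsCochordal (f i)) ∧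
      ∀ ⦃u v : V ⊕ V⦄, (whisker G).Adj u v → ∃ i, (f i).Adj u v := Nat.sInf_mem hne
  obtain ⟨f, hf1, hf2⟩ := hmem
  choose g hg using fun v : V => hf2 (whisker_adj_inl_inr G v)
  calc Fintype.card V
      = ∑ i : Fin (cochord (whisker G)), (Finset.univ.filter (fun v => g v = i)).card := by
        rw [← Finset.card_univ,
          Finset.card_eq_sum_card_fiberwise (fun v _ => Finset.mem_univ (g v))]
    _ ≤ ∑ _i : Fin (cochord (whisker G)), 2 := by
        apply Finset.sum_le_sum
        intro i _
        have hsub : ↑(Finset.univ.filter (fun v => g v = i)) ⊆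
            {v : V | (f i).Adj (Sum.inl v) (Sum.inr v)} := by
          intro v hv
          simp only [Finset.coe_filter, Set.mem_setOf_eq, Finset.mem_univ, true_and] at hv
          rw [Set.mem_setOf_eq, ← hv]
          exact hg v
        calc (Finset.univ.filter (fun v => g v = i)).card
            = (↑(Finset.univ.filter (fun v => g v = i)) : Set V).ncard :=
              (Set.ncard_coe_finset _).symm
          _ ≤ {v : V | (f i).Adj (Sum.inl v) (Sum.inr v)}.ncard :=
              Set.ncard_le_ncard hsub (Set.toFinite _)
          _ ≤ 2 := part1 G hG (f i) (hf1 i).1 (hf1 i).2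
    _ = 2 * cochord (whisker G) := by simp [mul_comm]

/-- If `G` is triangle-free, then every co-chordal subgraph of the whisker graph `W(G)`
contains at most two whisker edges, and consequently `cochord(W(G)) ≥ |V(G)|/2`. -/
theorem stmt13 {V : Type*} [Fintype V] (G : SimpleGraph V) (hG : G.CliqueFree 3) :
    (∀ H : SimpleGraph (V ⊕ V), H ≤ whisker G → IsCochordal H →
      {v : V | H.Adj (Sum.inl v) (Sum.inr v)}.ncard ≤ 2) ∧
    Fintype.card V ≤ 2 * cochord (whisker G) := by
  exact stmt13' G hG

end Paper
end

section
/- Let G be a finite simple graph whose independence number is α. Let W(G) be the graph obtained by attaching a whisker to every vertex of G. Then the induced matching number of W(G) is at most α: ind-match(W(G)) ≤ α(G). -/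
open SimpleGraph

namespace Paper

/-- An independent set of vertices. -/
def IsIndepSet {V : Type*} (G : SimpleGraph V) (s : Set V) : Prop :=
  s.Pairwise fun u v => ¬ G.Adj u v

/-- The independence number of `G`. -/
noncomputable def indepNum {V : Type*} (G : SimpleGraph V) : ℕ :=
  sSup { k | ∃ s : Set V, IsIndepSet G s ∧ s.ncard = k }

lemma whisker_adj_cases {V : Type*} (G : SimpleGraph V) {x y : V ⊕ V}
    (h : (whisker G).Adj x y) :
    (∃ u v, x = Sum.inl u ∧ y = Sum.inl v ∧ G.Adj u v) ∨
    (∃ v, x = Sum.inl v ∧ y = Sum.inr v) ∨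
    (∃ v, x = Sum.inr v ∧ y = Sum.inl v) := by
  rw [whisker, SimpleGraph.fromRel_adj] at h
  obtain ⟨hne, h | h⟩ := h
  · rcases h with ⟨u, v, hx, hy, ha⟩ | ⟨v, hx, hy⟩
    · exact Or.inl ⟨u, v, hx, hy, ha⟩
    · exact Or.inr (Or.inl ⟨v, hx, hy⟩)
  · rcases h with ⟨u, v, hy, hx, ha⟩ | ⟨v, hy, hx⟩
    · exact Or.inl ⟨v, u, hx, hy, ha.symm⟩
    · exact Or.inr (Or.inr ⟨v, hx, hy⟩)

/-- The induced matching number of the whisker graph `W(G)` is at most the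
independence number of `G`. -/
theorem stmt14 {V : Type*} [Fintype V] (G : SimpleGraph V) :
    indMatch (whisker G) ≤ indepNum G := by
  classical
  letI : LinearOrder V := IsWellOrder.linearOrder WellOrderingRel
  apply csSup_le
  · refine ⟨0, ⊥, ⟨?_, ?_⟩, by simp⟩
    · intro v hv; simp at hv
    · intro u v h hu hv
      exfalso
      rw [SimpleGraph.Subgraph.mem_support] at hu
      obtain ⟨w, hw⟩ := hu
      simp at hw
  rintro k ⟨M, ⟨hMm, hMi⟩, rfl⟩
  set g : V ⊕ V → V := Sum.elim id id with hg
  set f : Sym2 (V ⊕ V) → V :=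
    Sym2.lift ⟨fun x y => min (g x) (g y), fun x y => min_comm _ _⟩ with hf
  have adj_of_mem : ∀ e ∈ M.edgeSet, ∀ x ∈ e, ∃ y, M.Adj x y ∧ e = s(x, y) := by
    intro e he x hx
    induction e using Sym2.ind with
    | _ a b =>
      rw [SimpleGraph.Subgraph.mem_edgeSet] at he
      rcases Sym2.mem_iff.mp hx with rfl | rfl
      · exact ⟨b, he, rfl⟩
      · exact ⟨a, he.symm, Sym2.eq_swap.symm⟩
  have key : ∀ e ∈ M.edgeSet, Sum.inl (f e) ∈ e := by
    intro e he
    induction e using Sym2.ind with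
    | _ x y =>
      rw [SimpleGraph.Subgraph.mem_edgeSet] at he
      have hw := M.adj_sub he
      rcases whisker_adj_cases G hw with ⟨u, v, rfl, rfl, _⟩ | ⟨v, rfl, rfl⟩ | ⟨v, rfl, rfl⟩
      · simp only [hf, Sym2.lift_mk, hg, Sum.elim_inl, id]
        rcases min_choice u v with h | h <;> rw [h] <;> simp
      · simp [hf, hg]
      · simp [hf, hg, min_comm]
  have hinj : Set.InjOn f M.edgeSet := by
    intro e1 h1 e2 h2 hfe
    obtain ⟨y1, hy1, he1⟩ := adj_of_mem e1 h1 _ (key e1 h1)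
    obtain ⟨y2, hy2, he2⟩ := adj_of_mem e2 h2 _ (key e2 h2)
    rw [hfe] at hy1 he1
    have hyy : y1 = y2 := (hMm hy1.fst_mem).unique hy1 hy2
    exact he1.trans (hyy ▸ he2.symm)
  have hindep : IsIndepSet G (f '' M.edgeSet) := by
    rintro a ⟨e1, h1, rfl⟩ b ⟨e2, h2, rfl⟩ hne hadj
    obtain ⟨y1, hy1, he1⟩ := adj_of_mem e1 h1 _ (key e1 h1)
    obtain ⟨y2, hy2, he2⟩ := adj_of_mem e2 h2 _ (key e2 h2)
    have hadjW : (whisker G).Adj (Sum.inl (f e1)) (Sum.inl (f e2)) := by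
      rw [whisker, SimpleGraph.fromRel_adj]
      exact ⟨Sum.inl_injective.ne hne, Or.inl (Or.inl ⟨_, _, rfl, rfl, hadj⟩)⟩
    have hsup1 : Sum.inl (f e1) ∈ M.support := ⟨y1, hy1⟩
    have hsup2 : Sum.inl (f e2) ∈ M.support := ⟨y2, hy2⟩
    have hMab := hMi hadjW hsup1 hsup2
    have hy1eq : y1 = Sum.inl (f e2) := (hMm hy1.fst_mem).unique hy1 hMab
    have hmem1 : Sum.inl (f e2) ∈ e1 := by
      rw [he1, hy1eq]; exact Sym2.mem_mk_right _ _
    obtain ⟨z1, hz1, hE1⟩ := adj_of_mem e1 h1 _ hmem1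
    obtain ⟨z2, hz2, hE2⟩ := adj_of_mem e2 h2 _ (key e2 h2)
    have hz : z1 = z2 := (hMm hz1.fst_mem).unique hz1 hz2
    exact hne (congrArg f (hE1.trans (hz ▸ hE2.symm)))
  have hb : BddAbove {k | ∃ s : Set V, IsIndepSet G s ∧ s.ncard = k} := by
    refine ⟨Fintype.card V, ?_⟩
    rintro k ⟨t, _, rfl⟩
    have := Set.ncard_le_ncard (Set.subset_univ t) Set.finite_univ
    simpa [Set.ncard_univ, Nat.card_eq_fintype_card] using this
  calc M.edgeSet.ncard = (f '' M.edgeSet).ncard :=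
        (Set.ncard_image_of_injOn hinj).symm
    _ ≤ indepNum G := le_csSup hb ⟨f '' M.edgeSet, hindep, rfl⟩

end Paper
end
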